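/- Let R be a reduced elliptic root system of rank l with fundamental-set Π ∪ {a} and associated maps k and g. For α ∈ Π set c(α) = 1 if g(α) = ∅, c(α) = 2 if g(α) = 2ℤ+1, and α* := c(α)α + k(α)a, and let B₊ := {α : α ∈ Π} ∪ {α* : α ∈ Π}. Then R = W_{B₊}·B₊ := {w(μ) : w ∈ W_{B₊}, μ ∈ B₊} and W_R = W_{B₊}. -/

import Mathlib

/- ## Preliminaries: extended affine root systems (Saito) -/

noncomputable section

open Set

/-- The reflection `s_v : z ↦ z - (v^∨, z) v = z - (2 (v,z)/(v,v)) v` associated to a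
bilinear form `B` and a vector `v`.  (When `B v v = 0` this is the identity, by the
`division by zero = 0` convention; reflections are only ever used at non-isotropic `v`.) -/
def srefl {V : Type*} [AddCommGroup V] [Module ℝ V]
    (B : LinearMap.BilinForm ℝ V) (v : V) : Module.End ℝ V :=
  LinearMap.id - (((2 * (B v v)⁻¹) • (B v)).smulRight v)

/-- The Weyl group `W_S` generated by the reflections in the elements of `S`
(realized as the multiplicative closure; each generator is an involution, so this
agrees with the generated group). -/
def weyl {V : Type*} [AddCommGroup V] [Module ℝ V]
    (B : LinearMap.BilinForm ℝ V) (S : Set V) : Submonoid (Module.End ℝ V) :=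
  Submonoid.closure (srefl B '' S)

/-- The orbit `W_S · α`. -/
def worbit {V : Type*} [AddCommGroup V] [Module ℝ V]
    (B : LinearMap.BilinForm ℝ V) (S : Set V) (α : V) : Set V :=
  {v | ∃ w ∈ weyl B S, w α = v}

/-- `V⁰`, the set of isotropic vectors. -/
def nullSet {V : Type*} [AddCommGroup V] [Module ℝ V]
    (B : LinearMap.BilinForm ℝ V) : Set V := {v | B v v = 0}

/-- `ℤR`, the subgroup of `V` generated by `R`. -/
def zspan {V : Type*} [AddCommGroup V] (R : Set V) : AddSubgroup V :=
  AddSubgroup.closure R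

/-- `ℤ≥0 Π`, the set of nonnegative-integer linear combinations of elements of `Π`. -/
def nnspan {V : Type*} [AddCommMonoid V] (P : Set V) : Set V :=
  (AddSubmonoid.closure P : Set V)

/-- `(R, V)` is an `n`-extended affine root system of rank `l` (K. Saito). -/
structure IsEARS {V : Type*} [AddCommGroup V] [Module ℝ V]
    (B : LinearMap.BilinForm ℝ V) (R : Set V) (l n : ℕ) : Prop where
  rank_pos : 1 ≤ l
  findim : FiniteDimensional ℝ V
  symm : ∀ u v, B u v = B v u
  posSemidef : ∀ v, 0 ≤ B v v
  dim_eq : Module.finrank ℝ V = l + n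
  null_eq : nullSet B = (LinearMap.ker B : Set V)
  dim_null : Module.finrank ℝ (LinearMap.ker B) = n
  /-- (AX1), first half -/
  root_nonisotropic : ∀ α ∈ R, B α α ≠ 0
  /-- (AX1), second half -/
  span_eq_top : Submodule.span ℝ R = ⊤
  /-- (AX2) -/
  free : Module.Free ℤ (zspan R)
  /-- (AX2) -/
  rank_eq : Module.finrank ℤ (zspan R) = l + n
  /-- (AX3): `(α^∨, β) ∈ ℤ` -/
  integral : ∀ α ∈ R, ∀ β ∈ R, ∃ m : ℤ, 2 * B α β = (m : ℝ) * B α α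
  /-- (AX4) -/
  reflect : ∀ α ∈ R, srefl B α '' R = R
  /-- (AX5) -/
  connected : ∀ S' ⊆ R, S'.Nonempty → S' ≠ R → ∃ x ∈ S', ∃ y ∈ R \ S', B x y ≠ 0

/-- `R` is reduced, i.e. `R ∩ 2R = ∅`. -/
def IsReducedRS {V : Type*} [AddCommGroup V] [Module ℝ V] (R : Set V) : Prop :=
  ∀ α ∈ R, (2 : ℤ) • α ∉ R

/-- `Π₀` is a base (with `m` elements) of the root system `R₀`:
`Π₀ ⊆ R₀`, `Π₀` consists of `m` linearly independent elements, and
`R₀ = (R₀ ∩ ℤ≥0 Π₀) ∪ (R₀ ∩ ℤ≤0 Π₀)`. -/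
def IsBaseSet {M : Type*} [AddCommGroup M] [Module ℝ M] (R₀ P₀ : Set M) (m : ℕ) : Prop :=
  P₀ ⊆ R₀ ∧ P₀.Finite ∧ P₀.ncard = m ∧
  LinearIndependent ℝ ((↑) : P₀ → M) ∧
  R₀ = (R₀ ∩ nnspan P₀) ∪ (R₀ ∩ (-(nnspan P₀)))

/-- The bilinear form induced on a quotient `V ⧸ W` by a form vanishing on `W`. -/
def quotForm {V : Type*} [AddCommGroup V] [Module ℝ V]
    (W : Submodule ℝ V) (B : LinearMap.BilinForm ℝ V)
    (h1 : ∀ w ∈ W, B w = 0) (h2 : ∀ v : V, ∀ w ∈ W, B v w = 0) :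
    LinearMap.BilinForm ℝ (V ⧸ W) :=
  Submodule.liftQ W
    { toFun := fun v => Submodule.liftQ W (B v) (fun w hw => LinearMap.mem_ker.mpr (h2 v w hw))
      map_add' := fun u v => by
        ext x
        simp
      map_smul' := fun c v => by
        ext x
        simp }
    (fun w hw => by
      simp only [LinearMap.mem_ker]
      ext x
      simp [h1 w hw])

end

/-- A fundamental-set `Π ∪ {a}` of a reduced elliptic root system `R` of rank `l`:
(FS1) `a ∈ (ℤR)⁰` and `(ℤR)⁰ = ℤa ⊕ ℤb` for some `b`;
(FS2) `|Π| = l+1`, `Π ⊆ R` and `π_a(Π)` is a base of the affine root system `π_a(R)`. -/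
def IsFundamentalSet {V : Type*} [AddCommGroup V] [Module ℝ V]
    (B : LinearMap.BilinForm ℝ V) (R : Set V) (l : ℕ) (P : Set V) (a : V) : Prop :=
  a ∈ zspan R ∧ B a a = 0 ∧
  (∃ b : V, b ∈ zspan R ∧ B b b = 0 ∧
    ((zspan R : Set V) ∩ nullSet B = {v | ∃ m n : ℤ, v = m • a + n • b}) ∧
    (∀ m n : ℤ, m • a + n • b = 0 → m = 0 ∧ n = 0)) ∧
  P ⊆ R ∧ P.Finite ∧ P.ncard = l + 1 ∧
  IsBaseSet ((Submodule.span ℝ {a}).mkQ '' R) ((Submodule.span ℝ {a}).mkQ '' P) (l + 1)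

/-- The subset `⋃_{ε=±1} ((εα + ℤ kα a) ∪ (2εα + gα·kα a))` of the plane `ℝα ⊕ ℝa`;
here `gα : Bool`, with `false` encoding `g(α) = ∅` and `true` encoding `g(α) = 2ℤ+1`. -/
def kgLine {V : Type*} [AddCommGroup V] (a α : V) (kα : ℕ) (gα : Bool) : Set V :=
  {v | ∃ ε m : ℤ, (ε = 1 ∨ ε = -1) ∧ v = ε • α + (m * kα) • a} ∪
  {v | gα = true ∧ ∃ ε m : ℤ, (ε = 1 ∨ ε = -1) ∧ Odd m ∧ v = (2 * ε) • α + (m * kα) • a}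

/-- `k : Π → ℕ` and `g : Π → {∅, 2ℤ+1}` are the maps associated to the fundamental-set
`Π ∪ {a}`, i.e. `R ∩ (ℝα ⊕ ℝa) = ⋃_{ε=±1} ((εα + ℤ k(α) a) ∪ (2εα + g(α)k(α)a))`. -/
def IsKG {V : Type*} [AddCommGroup V] [Module ℝ V]
    (R : Set V) (a : V) (P : Set V) (k : V → ℕ) (g : V → Bool) : Prop :=
  ∀ α ∈ P, 0 < k α ∧
    R ∩ (Submodule.span ℝ {α, a} : Set V) = kgLine a α (k α) (g α)

/-- `c(α) = 1` if `g(α) = ∅`, `c(α) = 2` if `g(α) = 2ℤ+1`. -/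
def cMap {V : Type*} (g : V → Bool) (α : V) : ℕ := if g α then 2 else 1

/-- `α* := c(α)·α + k(α)·a`. -/
def starMap {V : Type*} [AddCommGroup V] (a : V) (k : V → ℕ) (g : V → Bool) (α : V) : V :=
  (cMap g α : ℤ) • α + (k α : ℤ) • a

/-- `B₊ := {α, α* | α ∈ Π}`. -/
def bplus {V : Type*} [AddCommGroup V] (a : V) (P : Set V) (k : V → ℕ) (g : V → Bool) :
    Set V :=
  P ∪ (starMap a k g '' P)

/-- `B := B₊ ∪ (−B₊)`. -/
def bfull {V : Type*} [AddCommGroup V] (a : V) (P : Set V) (k : V → ℕ) (g : V → Bool) :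
    Set V :=
  bplus a P k g ∪ (-(bplus a P k g))

/-- The set `R(Π,k,g) = ⋃_{w ∈ W_Π} ⋃_{α ∈ Π} ((w(α) + ℤk(α)a) ∪ (w(2α) + g(α)k(α)a))`. -/
def kgUnion {V : Type*} [AddCommGroup V] [Module ℝ V]
    (B : LinearMap.BilinForm ℝ V) (P : Set V) (a : V) (k : V → ℕ) (g : V → Bool) :
    Set V :=
  {v | ∃ w ∈ weyl B P, ∃ α ∈ P,
    (∃ m : ℤ, v = w α + (m * k α) • a) ∨
    (g α = true ∧ ∃ m : ℤ, Odd m ∧ v = w ((2 : ℤ) • α) + (m * k α) • a)}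

section Aux

variable {V : Type*} [AddCommGroup V] [Module ℝ V] (B : LinearMap.BilinForm ℝ V)

lemma srefl_apply (v z : V) : srefl B v z = z - (2 * (B v v)⁻¹ * B v z) • v := by
  simp [srefl, mul_comm]

lemma srefl_invol (v : V) : srefl B v * srefl B v = 1 := by
  ext z
  by_cases h : B v v = 0
  · simp [srefl_apply, h]
  · simp only [Module.End.mul_apply, srefl_apply, map_sub, map_smul, Module.End.one_apply,
      smul_eq_mul]
    have e : 2 * (B v v)⁻¹ * B v v = 2 := by field_simp
    rw [e]
    module

lemma srefl_preserves (hsymm : ∀ u w, B u w = B w u) (v z w : V) :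
    B (srefl B v z) (srefl B v w) = B z w := by
  by_cases h : B v v = 0
  · simp [srefl_apply, h]
  · simp only [srefl_apply, map_sub, map_smul, LinearMap.sub_apply, LinearMap.smul_apply,
      smul_eq_mul]
    field_simp
    rw [hsymm z v]
    ring

end Aux
section Aux2

variable {V : Type*} [AddCommGroup V] [Module ℝ V] (B : LinearMap.BilinForm ℝ V)

lemma weyl_inv {S : Set V} {w : Module.End ℝ V} (hw : w ∈ weyl B S) :
    ∃ w' ∈ weyl B S, w * w' = 1 ∧ w' * w = 1 := by
  induction hw using Submonoid.closure_induction with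
  | mem x hx =>
    obtain ⟨v, hv, rfl⟩ := hx
    exact ⟨srefl B v, Submonoid.subset_closure ⟨v, hv, rfl⟩, srefl_invol B v, srefl_invol B v⟩
  | one => exact ⟨1, one_mem _, one_mul 1, one_mul 1⟩
  | mul x y hx hy ihx ihy =>
    obtain ⟨x', hx', hx1, hx2⟩ := ihx
    obtain ⟨y', hy', hy1, hy2⟩ := ihy
    refine ⟨y' * x', mul_mem hy' hx', ?_, ?_⟩
    · rw [mul_assoc, ← mul_assoc y y' x', hy1, one_mul, hx1]
    · rw [mul_assoc, ← mul_assoc x' x y, hx2, one_mul, hy2]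

lemma weyl_preserves (hsymm : ∀ u w, B u w = B w u) {S : Set V} {w : Module.End ℝ V}
    (hw : w ∈ weyl B S) : ∀ z z', B (w z) (w z') = B z z' := by
  induction hw using Submonoid.closure_induction with
  | mem x hx =>
    obtain ⟨v, hv, rfl⟩ := hx
    exact fun z z' => srefl_preserves B hsymm v z z'
  | one => intro z z'; rfl
  | mul x y hx hy ihx ihy => intro z z'; exact (ihx _ _).trans (ihy _ _)

lemma weyl_fixes {S : Set V} {a : V} (ha : ∀ v ∈ S, B v a = 0) {w : Module.End ℝ V}
    (hw : w ∈ weyl B S) : w a = a := by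
  induction hw using Submonoid.closure_induction with
  | mem x hx =>
    obtain ⟨v, hv, rfl⟩ := hx
    rw [srefl_apply, ha v hv]
    simp
  | one => rfl
  | mul x y hx hy ihx ihy => show x (y a) = a; rw [ihy, ihx]

lemma weyl_maps_R {R S : Set V} (hSR : S ⊆ R) (hrefl : ∀ α ∈ R, srefl B α '' R = R)
    {w : Module.End ℝ V} (hw : w ∈ weyl B S) : ∀ β ∈ R, w β ∈ R := by
  induction hw using Submonoid.closure_induction with
  | mem x hx =>
    obtain ⟨v, hv, rfl⟩ := hx
    intro β hβ
    rw [← hrefl v (hSR hv)]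
    exact ⟨β, hβ, rfl⟩
  | one => intro β hβ; exact hβ
  | mul x y hx hy ihx ihy => intro β hβ; exact ihx _ (ihy _ hβ)

lemma weyl_mono {S T : Set V} (h : S ⊆ T) : weyl B S ≤ weyl B T :=
  Submonoid.closure_mono (Set.image_mono h)

lemma srefl_conj (hsymm : ∀ u w, B u w = B w u) {w w' : Module.End ℝ V}
    (hpres : ∀ z z', B (w z) (w z') = B z z') (h1 : w * w' = 1) (h2 : w' * w = 1) (μ : V) :
    srefl B (w μ) = w * srefl B μ * w' := by
  ext z
  have hz : w (w' z) = z := by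
    have := LinearMap.congr_fun h1 z; simpa using this
  have hBw : B (w μ) (w μ) = B μ μ := hpres μ μ
  have hBz : B (w μ) z = B μ (w' z) := by
    conv_lhs => rw [← hz]
    exact hpres μ (w' z)
  simp only [Module.End.mul_apply, srefl_apply, map_sub, map_smul, hBw, hBz, hz]

end Aux2

set_option maxHeartbeats 1600000 in
/-- `R = W_{B₊} · B₊` and `W_R = W_{B₊}`, where
`B₊ = {α, α* | α ∈ Π}` and `α* = c(α)α + k(α)a`. -/
theorem stmt10 {V : Type*} [AddCommGroup V] [Module ℝ V]
    (B : LinearMap.BilinForm ℝ V) (R : Set V) (l : ℕ)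
    (hE : IsEARS B R l 2) (hred : IsReducedRS R)
    (P : Set V) (a : V) (hfs : IsFundamentalSet B R l P a)
    (k : V → ℕ) (g : V → Bool) (hkg : IsKG R a P k g) :
    R = {v | ∃ w ∈ weyl B (bplus a P k g), ∃ μ ∈ bplus a P k g, w μ = v} ∧
    weyl B R = weyl B (bplus a P k g) := by
  classical
  obtain ⟨haR, haa, -, hPR, hPfin, hPcard, hsub, hfinS, hcardS, hindepS, hdecomp⟩ := hfs
  -- `a` is in the radical of `B`
  have haker : B a = 0 := by
    have h1 : a ∈ nullSet B := haa
    rw [hE.null_eq] at h1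
    exact LinearMap.mem_ker.mp h1
  have hBva : ∀ v, B v a = 0 := fun v => by rw [hE.symm v a, haker]; rfl
  have hBav : ∀ v, B a v = 0 := fun v => by rw [haker]; rfl
  set W : Submodule ℝ V := Submodule.span ℝ {a} with hW
  have h1W : ∀ w ∈ W, B w = 0 := by
    intro w hw
    obtain ⟨c, rfl⟩ := Submodule.mem_span_singleton.mp hw
    rw [map_smul, haker, smul_zero]
  have h2W : ∀ v : V, ∀ w ∈ W, B v w = 0 := by
    intro v w hw
    obtain ⟨c, rfl⟩ := Submodule.mem_span_singleton.mp hw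
    rw [map_smul, hBva, smul_zero]
  set Bq := quotForm W B h1W h2W with hBq
  set π := W.mkQ with hπdef
  have hBq_apply : ∀ x y : V, Bq (π x) (π y) = B x y := by
    intro x y
    simp [hBq, quotForm, hπdef]
    -- the image of the base in the quotient
  haveI hfty : Fintype ↥(π '' P) := hfinS.fintype
  have hrep : ∀ x ∈ AddSubmonoid.closure (π '' P), ∃ f : ↥(π '' P) → ℕ,
      x = ∑ i, f i • (i : V ⧸ W) := by
    intro x hx
    induction hx using AddSubmonoid.closure_induction with
    | mem y hy =>
      refine ⟨Pi.single ⟨y, hy⟩ 1, ?_⟩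
      rw [Finset.sum_eq_single (⟨y, hy⟩ : ↥(π '' P))]
      · simp
      · intro i _ hne; simp [Pi.single_apply, hne]
      · intro h; exact absurd (Finset.mem_univ _) h
    | zero => exact ⟨0, by simp⟩
    | add y z hy hz ihy ihz =>
      obtain ⟨f1, hf1⟩ := ihy
      obtain ⟨f2, hf2⟩ := ihz
      exact ⟨f1 + f2, by simp [hf1, hf2, add_smul, Finset.sum_add_distrib]⟩
  have hli : ∀ c : ↥(π '' P) → ℝ, ∑ i, c i • (i : V ⧸ W) = 0 → ∀ i, c i = 0 := by
    intro c hc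
    exact Fintype.linearIndependent_iff.mp hindepS c hc
  -- Main lemma: every root is conjugate under `W_P` into a plane `ℝα ⊕ ℝa`, `α ∈ P`.
  have main : ∀ n : ℕ, ∀ β ∈ R, ∀ f : ↥(π '' P) → ℕ, (∑ i, f i) = n →
      π β = ∑ i, f i • (i : V ⧸ W) →
      ∃ w ∈ weyl B P, ∃ α ∈ P, w β ∈ (Submodule.span ℝ {α, a} : Set V) := by
    intro n
    induction n using Nat.strong_induction_on with
    | _ n ih =>
      intro β hβR f hsum hπβ
      have hBβpos : 0 < B β β :=
        lt_of_le_of_ne (hE.posSemidef β) (Ne.symm (hE.root_nonisotropic β hβR))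
      have hquad : B β β = ∑ i, (f i : ℝ) * Bq (π β) (i : V ⧸ W) := by
        have h0 : B β β = Bq (π β) (π β) := (hBq_apply β β).symm
        rw [h0]
        nth_rewrite 2 [hπβ]
        rw [map_sum]
        refine Finset.sum_congr rfl fun i _ => ?_
        rw [map_nsmul, nsmul_eq_mul]
      obtain ⟨i0, hfne, hBqpos⟩ : ∃ i, f i ≠ 0 ∧ 0 < Bq (π β) (i : V ⧸ W) := by
        by_contra hc
        push_neg at hc
        have hsum0 : ∑ i, (f i : ℝ) * Bq (π β) (i : V ⧸ W) ≤ 0 := by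
          refine Finset.sum_nonpos fun i _ => ?_
          by_cases hfi : f i = 0
          · simp [hfi]
          · exact mul_nonpos_of_nonneg_of_nonpos (by positivity) (hc i hfi)
        rw [← hquad] at hsum0
        linarith
      obtain ⟨α, hαP, hπα⟩ := i0.2
      have hαR : α ∈ R := hPR hαP
      have hA : 0 < B α α :=
        lt_of_le_of_ne (hE.posSemidef α) (Ne.symm (hE.root_nonisotropic α hαR))
      have hBαβ : 0 < B α β := by
        rw [← hπα, hBq_apply] at hBqpos
        rw [hE.symm α β]
        exact hBqpos
      obtain ⟨m, hm⟩ := hE.integral α hαR β hβR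
      have hmposR : 0 < (m : ℝ) := by
        have h8 : 0 < (m : ℝ) * B α α := by linarith
        rcases mul_pos_iff.mp h8 with ⟨h9, _⟩ | ⟨_, h10⟩
        · exact h9
        · linarith
      have hm1 : (1 : ℤ) ≤ m := by
        have h9 : (0 : ℤ) < m := by exact_mod_cast hmposR
        omega
      set β' := srefl B α β with hβ'def
      have hβ'R : β' ∈ R := by
        rw [← hE.reflect α hαR]; exact ⟨β, hβR, rfl⟩
      have hβ'eq : β' = β - (m : ℝ) • α := by
        rw [hβ'def, srefl_apply]
        congr 2
        field_simp
        linarith [hm]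
      have hπβ' : π β' = (∑ i, f i • (i : V ⧸ W)) - (m : ℝ) • (i0 : V ⧸ W) := by
        rw [hβ'eq, map_sub, map_smul, hπβ, hπα]
      have hcastsum : ∀ f'' : ↥(π '' P) → ℕ,
          ∑ i, ((f'' i : ℝ)) • (i : V ⧸ W) = ∑ i, f'' i • (i : V ⧸ W) :=
        fun f'' => Finset.sum_congr rfl fun i _ => (Nat.cast_smul_eq_nsmul ℝ _ _)
      have hite : ∑ i, (if i = i0 then (m : ℝ) else 0) • (i : V ⧸ W)
          = (m : ℝ) • (i0 : V ⧸ W) := by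
        rw [Finset.sum_eq_single i0]
        · simp
        · intro i _ hne; simp [hne]
        · intro h; exact absurd (Finset.mem_univ _) h
      have hβ'img : π β' ∈ π '' R := ⟨β', hβ'R, rfl⟩
      rw [hdecomp] at hβ'img
      rcases hβ'img with hpos | hneg
      · -- positive case: recurse with smaller height
        obtain ⟨f', hf'⟩ := hrep _ hpos.2
        have hzero : ∑ i, (((f i : ℝ) - (if i = i0 then (m : ℝ) else 0)) - (f' i : ℝ))
            • (i : V ⧸ W) = 0 := by
          simp only [sub_smul]
          rw [Finset.sum_sub_distrib, Finset.sum_sub_distrib, hite, hcastsum f, hcastsum f',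
            ← hπβ', hf', sub_self]
        have hco := hli _ hzero
        have hf'i0 : (f' i0 : ℝ) = (f i0 : ℝ) - (m : ℝ) := by
          have := hco i0; rw [if_pos rfl] at this; linarith
        have hfeq : ∀ i, i ≠ i0 → f' i = f i := by
          intro i hi
          have := hco i
          simp only [if_neg hi, sub_zero] at this
          have h2 : (f' i : ℝ) = (f i : ℝ) := by linarith
          exact_mod_cast h2
        have hlt : ∑ i, f' i < n := by
          rw [← hsum]
          refine Finset.sum_lt_sum (fun i _ => ?_) ⟨i0, Finset.mem_univ _, ?_⟩
          · by_cases hi : i = i0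
            · subst hi
              have : (f' i : ℝ) ≤ (f i : ℝ) := by rw [hf'i0]; linarith
              exact_mod_cast this
            · rw [hfeq i hi]
          · have : (f' i0 : ℝ) < (f i0 : ℝ) := by rw [hf'i0]; linarith
            exact_mod_cast this
        obtain ⟨w, hw, α1, hα1, hws⟩ := ih _ hlt β' hβ'R f' rfl hf'
        refine ⟨w * srefl B α, mul_mem hw (Submonoid.subset_closure ⟨α, hαP, rfl⟩), α1, hα1, ?_⟩
        show (w * srefl B α) β ∈ _
        rw [Module.End.mul_apply, ← hβ'def]
        exact hws
      · -- negative case: `β` is proportional to `α` modulo `ℝa`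
        have hneg2 : -π β' ∈ AddSubmonoid.closure (π '' P) := by
          have h3 := hneg.2
          rwa [Set.mem_neg] at h3
        obtain ⟨f2, hf2⟩ := hrep _ hneg2
        have hzero : ∑ i, (((f i : ℝ) + (f2 i : ℝ)) - (if i = i0 then (m : ℝ) else 0))
            • (i : V ⧸ W) = 0 := by
          simp only [sub_smul, add_smul]
          rw [Finset.sum_sub_distrib, Finset.sum_add_distrib, hite, hcastsum f, hcastsum f2,
            ← hf2, ← hπβ]
          have : π β + -π β' - (m : ℝ) • (i0 : V ⧸ W) = π β - π β' - ((m : ℝ) • (i0 : V ⧸ W)) := by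
            abel
          rw [this, hπβ', hπβ]
          abel
        have hco := hli _ hzero
        have hfzero : ∀ i, i ≠ i0 → f i = 0 := by
          intro i hi
          have := hco i
          simp only [if_neg hi, sub_zero] at this
          have h4 : (0:ℝ) ≤ (f i : ℝ) := by positivity
          have h5 : (0:ℝ) ≤ (f2 i : ℝ) := by positivity
          have h6 : (f i : ℝ) = 0 := by linarith
          exact_mod_cast h6
        have hπβα : π β = (f i0 : ℝ) • π α := by
          rw [hπβ, Finset.sum_eq_single i0]
          · rw [hπα, Nat.cast_smul_eq_nsmul]
          · intro i _ hne; rw [hfzero i hne]; simp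
          · intro h; exact absurd (Finset.mem_univ _) h
        have hker : β - (f i0 : ℝ) • α ∈ W := by
          have h7 : π (β - (f i0 : ℝ) • α) = 0 := by
            rw [map_sub, map_smul, hπβα, sub_self]
          rwa [hπdef, ← LinearMap.mem_ker, Submodule.ker_mkQ] at h7
        refine ⟨1, one_mem _, α, hαP, ?_⟩
        show (1 : Module.End ℝ V) β ∈ _
        rw [Module.End.one_apply]
        have hspanW : (W : Set V) ⊆ (Submodule.span ℝ {α, a} : Set V) := by
          rw [hW]
          exact Submodule.span_mono (Set.singleton_subset_iff.mpr (by simp))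
        have hβd : β = (β - (f i0 : ℝ) • α) + (f i0 : ℝ) • α := by abel
        rw [hβd]
        exact Submodule.add_mem _ (hspanW hker)
          (Submodule.smul_mem _ _ (Submodule.subset_span (by simp)))
  -- negation of roots
  have hnegroot : ∀ β ∈ R, -β ∈ R := by
    intro β hβ
    have hBβ : B β β ≠ 0 := hE.root_nonisotropic β hβ
    have h1 : srefl B β β = -β := by
      rw [srefl_apply]
      have h2 : 2 * (B β β)⁻¹ * B β β = 2 := by field_simp
      rw [h2]
      module
    rw [← h1, ← hE.reflect β hβ]
    exact ⟨β, hβ, rfl⟩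
  -- every root is `W_P`-conjugate into some plane
  have conj_plane : ∀ β ∈ R, ∃ w ∈ weyl B P, ∃ α ∈ P,
      w β ∈ (Submodule.span ℝ {α, a} : Set V) := by
    intro β hβ
    have himg : π β ∈ π '' R := ⟨β, hβ, rfl⟩
    rw [hdecomp] at himg
    rcases himg with hpos | hneg
    · obtain ⟨f, hf⟩ := hrep _ hpos.2
      exact main _ β hβ f rfl hf
    · have h1 : -π β ∈ AddSubmonoid.closure (π '' P) := by
        have h2 := hneg.2
        rwa [Set.mem_neg] at h2
      obtain ⟨f, hf⟩ := hrep _ h1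
      have h2 : π (-β) = ∑ i, f i • (i : V ⧸ W) := by rw [map_neg, hf]
      obtain ⟨w, hw, α, hα, hws⟩ := main _ (-β) (hnegroot β hβ) f rfl h2
      refine ⟨w, hw, α, hα, ?_⟩
      have h3 : w β = -(w (-β)) := by rw [map_neg, neg_neg]
      rw [h3]
      exact Submodule.neg_mem _ hws
  set Bp := bplus a P k g with hBp
  set O : Set V := {v | ∃ w ∈ weyl B Bp, ∃ μ ∈ Bp, w μ = v} with hOdef
  have hOmem : ∀ μ ∈ Bp, μ ∈ O := fun μ hμ => ⟨1, one_mem _, μ, hμ, rfl⟩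
  have hOstep : ∀ x ∈ Bp, ∀ v ∈ O, srefl B x v ∈ O := by
    rintro x hx v ⟨w, hw, μ, hμ, rfl⟩
    exact ⟨srefl B x * w, mul_mem (Submonoid.subset_closure ⟨x, hx, rfl⟩) hw, μ, hμ, rfl⟩
  -- each `kgLine` is contained in the orbit `O`
  have hkgO : ∀ α ∈ P, ∀ v ∈ kgLine a α (k α) (g α), v ∈ O := by
    intro α hαP v hv
    have hαR := hPR hαP
    have hA : 0 < B α α :=
      lt_of_le_of_ne (hE.posSemidef α) (Ne.symm (hE.root_nonisotropic α hαR))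
    have hAne : B α α ≠ 0 := ne_of_gt hA
    have hBαa : B α a = 0 := hBva α
    have hαBp : α ∈ Bp := Or.inl hαP
    have hstarBp : starMap a k g α ∈ Bp := Or.inr ⟨α, hαP, rfl⟩
    set K : ℝ := (k α : ℝ) with hK
    -- reflection in α
    have hRα : ∀ e c : ℝ, srefl B α (e • α + c • a) = (-e) • α + c • a := by
      intro e c
      rw [srefl_apply]
      have h1 : B α (e • α + c • a) = e * B α α := by
        simp [hBαa, smul_eq_mul]
      rw [h1]
      have h2 : 2 * (B α α)⁻¹ * (e * B α α) = 2 * e := by field_simp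
      rw [h2]
      module
    have hflip : ∀ e c : ℝ, e • α + c • a ∈ O → (-e) • α + c • a ∈ O := by
      intro e c h
      rw [← hRα]
      exact hOstep α hαBp _ h
    -- case split on `g α`
    by_cases hg : g α = true
    · -- `c(α) = 2`, `α* = 2α + k(α)a`
      have hstareq : starMap a k g α = (2:ℝ) • α + K • a := by
        rw [starMap, cMap, if_pos hg]
        rw [← Int.cast_smul_eq_zsmul ℝ ((2:ℕ):ℤ) α, ← Int.cast_smul_eq_zsmul ℝ ((k α : ℤ)) a]
        push_cast
        ring_nf
        rw [hK]
      have hBstar : ∀ e c : ℝ, B ((2:ℝ) • α + K • a) (e • α + c • a) = 2 * e * B α α := by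
        intro e c
        simp [hBαa, hBav, smul_eq_mul]
        ring
      have hBss : B ((2:ℝ) • α + K • a) ((2:ℝ) • α + K • a) = 4 * B α α := by
        rw [hBstar]; ring
      have hRstar : ∀ e c : ℝ, srefl B ((2:ℝ) • α + K • a) (e • α + c • a)
          = (-e) • α + (c - e * K) • a := by
        intro e c
        rw [srefl_apply, hBss, hBstar]
        have h2 : 2 * (4 * B α α)⁻¹ * (2 * e * B α α) = e := by field_simp; ring
        rw [h2]
        module
      have hstarO : (2:ℝ) • α + K • a ∈ O := by
        rw [← hstareq]; exact hOmem _ hstarBp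
      have hstarstep : ∀ e c : ℝ, e • α + c • a ∈ O → (-e) • α + (c - e * K) • a ∈ O := by
        intro e c h
        rw [← hRstar]
        exact hOstep _ (hstareq ▸ hstarBp) _ h
      -- line 1 : points (ε:ℝ)•α + (m h)•a, step 1
      have hline1 : ∀ n : ℕ, ∀ m e : ℤ, (e = 1 ∨ e = -1) → m.natAbs = n →
          (e:ℝ) • α + ((m:ℝ) * K) • a ∈ O := by
        intro n
        induction n using Nat.strong_induction_on with
        | _ n ihn =>
          intro m e he hm
          rcases Nat.eq_zero_or_pos n with h0 | hpos
          · have hm0 : m = 0 := by omega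
            subst hm0
            have hα1 : (1:ℝ) • α + ((0:ℤ):ℝ) • a ∈ O := by
              have : (1:ℝ) • α + (((0:ℤ):ℝ)) • a = α := by push_cast; module
              rw [this]; exact hOmem α hαBp
            rcases he with rfl | rfl
            · have : ((0:ℤ):ℝ) * K = ((0:ℤ):ℝ) := by push_cast; ring
              push_cast
              simpa using hOmem α hαBp
            · push_cast
              have := hflip 1 0 (by simpa using hOmem α hαBp)
              simpa using this
          · -- n ≥ 1, descend by 1
            set e0 : ℤ := if 0 ≤ m then 1 else -1 with he0
            have he0' : e0 = 1 ∨ e0 = -1 := by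
              rw [he0]; split <;> simp
            have hm' : (m - e0).natAbs = n - 1 := by
              rw [he0]; split <;> omega
            have hprev : ((-e0 : ℤ):ℝ) • α + (((m - e0 : ℤ):ℝ) * K) • a ∈ O := by
              have := ihn (n-1) (by omega) (m - e0) (-e0) (by omega) hm'
              exact this
            have hnext := hstarstep _ _ hprev
            have hme : (e0:ℝ) • α + ((m:ℝ) * K) • a ∈ O := by
              have heq : (-((-e0:ℤ):ℝ)) • α + (((m - e0 : ℤ):ℝ) * K - ((-e0:ℤ):ℝ) * K) • a
                  = (e0:ℝ) • α + ((m:ℝ) * K) • a := by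
                push_cast
                ring_nf
              rwa [heq] at hnext
            rcases he with rfl | rfl <;> rcases he0' with h1 | h1 <;> rw [h1] at hme
            · exact hme
            · have := hflip _ _ hme; push_cast at this ⊢; simpa using this
            · have := hflip _ _ hme; push_cast at this ⊢; simpa using this
            · exact hme
      -- line 2 : points (2ε:ℝ)•α + (m K)•a, m odd, step 2
      have hline2 : ∀ n : ℕ, ∀ m e : ℤ, (e = 1 ∨ e = -1) → Odd m → m.natAbs = n →
          ((2*e : ℤ):ℝ) • α + ((m:ℝ) * K) • a ∈ O := by
        intro n
        induction n using Nat.strong_induction_on with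
        | _ n ihn =>
          intro m e he hodd hm
          rcases Nat.lt_or_ge n 2 with h2 | h2
          · -- n ≤ 1, and m odd forces |m| = 1
            have hm1 : m = 1 ∨ m = -1 := by
              rcases hodd with ⟨j, hj⟩; omega
            have hbase : ((2:ℝ)) • α + ((1:ℝ) * K) • a ∈ O := by
              have : ((2:ℝ)) • α + ((1:ℝ) * K) • a = (2:ℝ) • α + K • a := by ring_nf
              rw [this]; exact hstarO
            have hbase2 : ((-2:ℝ)) • α + ((-1:ℝ) * K) • a ∈ O := by
              have := hstarstep 2 (1*K) hbase
              have heq : (-(2:ℝ)) • α + (1 * K - 2 * K) • a = ((-2:ℝ)) • α + ((-1:ℝ) * K) • a := by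
                ring_nf
              rwa [heq] at this
            rcases hm1 with rfl | rfl <;> rcases he with rfl | rfl
            · push_cast; simpa using hbase
            · have := hflip 2 (1*K) hbase; push_cast; simpa using this
            · have := hflip (-2) ((-1)*K) hbase2; push_cast; simpa using this
            · push_cast; simpa using hbase2
          · -- n ≥ 2, descend by 2
            set e0 : ℤ := if 0 ≤ m then 1 else -1 with he0
            have he0' : e0 = 1 ∨ e0 = -1 := by
              rw [he0]; split <;> simp
            have hodd' : Odd (m - 2*e0) := by
              rcases hodd with ⟨j, hj⟩
              exact ⟨j - e0, by omega⟩
            have hm' : (m - 2*e0).natAbs = n - 2 := by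
              rw [he0]; split <;> omega
            have hprev := ihn (n-2) (by omega) (m - 2*e0) (-e0) (by omega) hodd' hm'
            have hnext := hstarstep _ _ hprev
            have hme : ((2*e0 : ℤ):ℝ) • α + ((m:ℝ) * K) • a ∈ O := by
              have heq : (-((2*(-e0):ℤ):ℝ)) • α
                  + ((((m - 2*e0):ℤ):ℝ) * K - ((2*(-e0):ℤ):ℝ) * K) • a
                  = ((2*e0 : ℤ):ℝ) • α + ((m:ℝ) * K) • a := by
                push_cast
                ring_nf
              rwa [heq] at hnext
            rcases he with rfl | rfl <;> rcases he0' with h1 | h1 <;> rw [h1] at hme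
            · exact hme
            · have := hflip _ _ hme; push_cast at this ⊢; simpa using this
            · have := hflip _ _ hme; push_cast at this ⊢; simpa using this
            · exact hme
      -- now dispatch `v`
      rcases hv with ⟨ε, m, hε, rfl⟩ | ⟨-, ε, m, hε, hodd, rfl⟩
      · have h3 : (ε • α + (m * (k α : ℤ)) • a : V)
            = (ε:ℝ) • α + ((m:ℝ) * K) • a := by
          rw [← Int.cast_smul_eq_zsmul ℝ ε α, ← Int.cast_smul_eq_zsmul ℝ (m * (k α : ℤ)) a]
          push_cast
          ring_nf
          rw [hK]
        rw [h3]
        exact hline1 _ m ε hε rfl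
      · have h3 : ((2*ε) • α + (m * (k α : ℤ)) • a : V)
            = ((2*ε:ℤ):ℝ) • α + ((m:ℝ) * K) • a := by
          rw [← Int.cast_smul_eq_zsmul ℝ (2*ε) α, ← Int.cast_smul_eq_zsmul ℝ (m * (k α : ℤ)) a]
          push_cast
          ring_nf
          rw [hK]
        rw [h3]
        exact hline2 _ m ε hε hodd rfl
    · -- `c(α) = 1`, `α* = α + k(α)a`
      have hg' : g α = false := by simpa using hg
      have hstareq : starMap a k g α = (1:ℝ) • α + K • a := by
        rw [starMap, cMap, if_neg (by simp [hg'])]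
        rw [← Int.cast_smul_eq_zsmul ℝ ((1:ℕ):ℤ) α, ← Int.cast_smul_eq_zsmul ℝ ((k α : ℤ)) a]
        push_cast
        ring_nf
        rw [hK]
      have hBstar : ∀ e c : ℝ, B ((1:ℝ) • α + K • a) (e • α + c • a) = e * B α α := by
        intro e c
        simp [hBαa, hBav, smul_eq_mul]
      have hBss : B ((1:ℝ) • α + K • a) ((1:ℝ) • α + K • a) = B α α := by
        rw [hBstar]; ring
      have hRstar : ∀ e c : ℝ, srefl B ((1:ℝ) • α + K • a) (e • α + c • a)
          = (-e) • α + (c - 2 * e * K) • a := by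
        intro e c
        rw [srefl_apply, hBss, hBstar]
        have h2 : 2 * (B α α)⁻¹ * (e * B α α) = 2 * e := by field_simp
        rw [h2]
        module
      have hstarO : (1:ℝ) • α + K • a ∈ O := by
        rw [← hstareq]; exact hOmem _ hstarBp
      have hstarstep : ∀ e c : ℝ, e • α + c • a ∈ O → (-e) • α + (c - 2 * e * K) • a ∈ O := by
        intro e c h
        rw [← hRstar]
        exact hOstep _ (hstareq ▸ hstarBp) _ h
      have hline1 : ∀ n : ℕ, ∀ m e : ℤ, (e = 1 ∨ e = -1) → m.natAbs = n →
          (e:ℝ) • α + ((m:ℝ) * K) • a ∈ O := by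
        intro n
        induction n using Nat.strong_induction_on with
        | _ n ihn =>
          intro m e he hm
          rcases Nat.lt_or_ge n 2 with h2 | h2
          · -- |m| ≤ 1
            have hm1 : m = 0 ∨ m = 1 ∨ m = -1 := by omega
            have hbase1 : ((1:ℝ)) • α + ((1:ℝ) * K) • a ∈ O := by
              have : ((1:ℝ)) • α + ((1:ℝ) * K) • a = (1:ℝ) • α + K • a := by ring_nf
              rw [this]; exact hstarO
            have hbase0 : ((1:ℝ)) • α + ((0:ℝ) * K) • a ∈ O := by
              have : ((1:ℝ)) • α + ((0:ℝ) * K) • a = α := by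
                push_cast; module
              rw [this]; exact hOmem α hαBp
            have hbasen1 : ((-1:ℝ)) • α + ((-1:ℝ) * K) • a ∈ O := by
              have := hstarstep 1 (1*K) hbase1
              have heq : (-(1:ℝ)) • α + (1 * K - 2 * 1 * K) • a
                  = ((-1:ℝ)) • α + ((-1:ℝ) * K) • a := by ring_nf
              rwa [heq] at this
            rcases hm1 with rfl | rfl | rfl <;> rcases he with rfl | rfl
            · push_cast; simpa using hbase0
            · have := hflip 1 ((0:ℝ)*K) hbase0; push_cast; simpa using this
            · push_cast; simpa using hbase1
            · have := hflip 1 ((1:ℝ)*K) hbase1; push_cast; simpa using this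
            · have := hflip (-1) ((-1:ℝ)*K) hbasen1; push_cast; simpa using this
            · push_cast; simpa using hbasen1
          · set e0 : ℤ := if 0 ≤ m then 1 else -1 with he0
            have he0' : e0 = 1 ∨ e0 = -1 := by
              rw [he0]; split <;> simp
            have hm' : (m - 2*e0).natAbs = n - 2 := by
              rw [he0]; split <;> omega
            have hprev := ihn (n-2) (by omega) (m - 2*e0) (-e0) (by omega) hm'
            have hnext := hstarstep _ _ hprev
            have hme : (e0:ℝ) • α + ((m:ℝ) * K) • a ∈ O := by
              have heq : (-((-e0:ℤ):ℝ)) • α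
                  + ((((m - 2*e0):ℤ):ℝ) * K - 2 * ((-e0:ℤ):ℝ) * K) • a
                  = (e0:ℝ) • α + ((m:ℝ) * K) • a := by
                push_cast
                ring_nf
              rwa [heq] at hnext
            rcases he with rfl | rfl <;> rcases he0' with h1 | h1 <;> rw [h1] at hme
            · exact hme
            · have := hflip _ _ hme; push_cast at this ⊢; simpa using this
            · have := hflip _ _ hme; push_cast at this ⊢; simpa using this
            · exact hme
      rcases hv with ⟨ε, m, hε, rfl⟩ | ⟨hgt, -⟩
      · have h3 : (ε • α + (m * (k α : ℤ)) • a : V)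
            = (ε:ℝ) • α + ((m:ℝ) * K) • a := by
          rw [← Int.cast_smul_eq_zsmul ℝ ε α, ← Int.cast_smul_eq_zsmul ℝ (m * (k α : ℤ)) a]
          push_cast
          ring_nf
          rw [hK]
        rw [h3]
        exact hline1 _ m ε hε rfl
      · rw [hg'] at hgt; exact absurd hgt (by simp)
  -- `B₊ ⊆ R`
  have hBpR : Bp ⊆ R := by
    rintro x (hx | ⟨α, hαP, rfl⟩)
    · exact hPR hx
    · have hmem : starMap a k g α ∈ R ∩ (Submodule.span ℝ {α, a} : Set V) := by
        rw [(hkg α hαP).2]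
        by_cases hg : g α = true
        · refine Or.inr ⟨hg, 1, 1, Or.inl rfl, odd_one, ?_⟩
          simp [starMap, cMap, hg]
        · have hg' : g α = false := by simpa using hg
          refine Or.inl ⟨1, 1, Or.inl rfl, ?_⟩
          simp [starMap, cMap, hg']
      exact hmem.1
  -- `R ⊆ O`
  have hRO : R ⊆ O := by
    intro β hβ
    obtain ⟨w, hw, α, hαP, hspan⟩ := conj_plane β hβ
    have hvR : w β ∈ R := weyl_maps_R B hPR hE.reflect hw β hβ
    have hvkg : w β ∈ kgLine a α (k α) (g α) := by
      rw [← (hkg α hαP).2]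
      exact ⟨hvR, hspan⟩
    have hvO : w β ∈ O := hkgO α hαP _ hvkg
    obtain ⟨w', hw', h1, h2⟩ := weyl_inv B hw
    have hwBp : w' ∈ weyl B Bp := weyl_mono B Set.subset_union_left hw'
    obtain ⟨u, hu, μ, hμ, hup⟩ := hvO
    refine ⟨w' * u, mul_mem hwBp hu, μ, hμ, ?_⟩
    rw [Module.End.mul_apply, hup]
    show w' (w β) = β
    have := LinearMap.congr_fun h2 β
    simpa using this
  -- `O ⊆ R`
  have hOR : O ⊆ R := by
    rintro v ⟨w, hw, μ, hμ, rfl⟩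
    exact weyl_maps_R B hBpR hE.reflect hw μ (hBpR hμ)
  refine ⟨Set.Subset.antisymm hRO hOR, le_antisymm ?_ (weyl_mono B hBpR)⟩
  refine Submonoid.closure_le.mpr ?_
  rintro x ⟨β, hβR, rfl⟩
  obtain ⟨w, hw, μ, hμ, rfl⟩ := hRO hβR
  obtain ⟨w', hw', h1, h2⟩ := weyl_inv B hw
  rw [srefl_conj B hE.symm (weyl_preserves B hE.symm hw) h1 h2 μ]
  exact mul_mem (mul_mem hw (Submonoid.subset_closure ⟨μ, hμ, rfl⟩)) hw'
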